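/- For every graphon W and every q ∈ ℕ, the set of fractional q-quotients Ŝ_q(W) = { W/ρ : ρ a fractional q-partition } is compact in ℝ^q × ℝ^{q×q} with the ℓ¹ metric. -/

import Mathlib

open MeasureTheory

/-- A fractional `q`-partition of `[0,1]`. -/
def IsFracPartition (q : ℕ) (ρ : Fin q → ℝ → ℝ) : Prop :=
  (∀ i, Measurable (ρ i)) ∧ (∀ i x, ρ i x ∈ Set.Icc (0:ℝ) 1) ∧
    (∀ x, ∑ i, ρ i x = 1)

/-- `α_i(ρ) = ∫₀¹ ρ_i`. -/
noncomputable def qalpha (q : ℕ) (ρ : Fin q → ℝ → ℝ) : Fin q → ℝ :=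
  fun i => ∫ x in Set.Icc (0:ℝ) 1, ρ i x

/-- `β_{ij}(W/ρ)`. -/
noncomputable def qbeta (q : ℕ) (W : ℝ × ℝ → ℝ) (ρ : Fin q → ℝ → ℝ) :
    Fin q → Fin q → ℝ :=
  fun i j => ∫ z in Set.Icc (0:ℝ) 1 ×ˢ Set.Icc (0:ℝ) 1, ρ i z.1 * ρ j z.2 * W z

section Aux

open MeasureTheory Filter Topology Set
open scoped ENNReal

section Hilbert

variable {H : Type*} [NormedAddCommGroup H] [InnerProductSpace ℝ H] [CompleteSpace H]
  [TopologicalSpace.SeparableSpace H]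

/-- Sequential Banach-Alaoglu in a separable real Hilbert space. -/
theorem weak_seq_compact (u : ℕ → H) (hu : ∀ n, ‖u n‖ ≤ 1) :
    ∃ g : H, ‖g‖ ≤ 1 ∧ ∃ φ : ℕ → ℕ, StrictMono φ ∧
      ∀ h : H, Tendsto (fun m => (inner ℝ (u (φ m)) h : ℝ)) atTop (𝓝 (inner ℝ g h)) := by
  classical
  set td := InnerProductSpace.toDual ℝ H with htd
  set x : ℕ → WeakDual ℝ H := fun n => StrongDual.toWeakDual (td (u n)) with hx
  have hnorm : ∀ n, ‖WeakDual.toStrongDual (x n)‖ ≤ 1 := by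
    intro n
    calc ‖WeakDual.toStrongDual (x n)‖ = ‖td (u n)‖ := rfl
      _ = ‖u n‖ := by simp
      _ ≤ 1 := hu n
  have hxball : ∀ n, x n ∈ (WeakDual.toStrongDual ⁻¹' Metric.closedBall 0 1 : Set (WeakDual ℝ H)) := by
    intro n
    simpa [Set.mem_preimage, Metric.mem_closedBall, dist_zero_right] using hnorm n
  obtain ⟨y, hyball, hy⟩ := (WeakDual.isCompact_closedBall (𝕜 := ℝ) (E := H) 0 1).exists_mapClusterPt
      (f := atTop) (u := x)
      (le_principal_iff.mpr (mem_map.mpr (Eventually.of_forall hxball)))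
  have hynorm : ‖WeakDual.toStrongDual y‖ ≤ 1 := by
    simpa [Metric.mem_closedBall, dist_zero_right] using hyball
  -- countable dense subset
  obtain ⟨D, hDc, hDd⟩ := TopologicalSpace.exists_countable_dense H
  have hDne : D.Nonempty := hDd.nonempty
  obtain ⟨e, hrange⟩ := Set.Countable.exists_eq_range hDc hDne
  -- diagonal extraction on the countable family
  have hfreq : ∀ m : ℕ, ∃ᶠ n in atTop,
      ∀ k ≤ m, |x n (e k) - y (e k)| < 1 / (m + 1 : ℝ) := by
    intro m
    have hU : {z : WeakDual ℝ H | ∀ k ≤ m, |z (e k) - y (e k)| < 1 / (m + 1 : ℝ)} ∈ 𝓝 y := by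
      have : {z : WeakDual ℝ H | ∀ k ≤ m, |z (e k) - y (e k)| < 1 / (m + 1 : ℝ)}
          = ⋂ k ∈ Finset.range (m + 1), {z : WeakDual ℝ H | |z (e k) - y (e k)| < 1 / (m + 1 : ℝ)} := by
        ext z; simp [Nat.lt_succ_iff]
      rw [this]
      refine (Filter.biInter_finset_mem _).mpr fun k _ => ?_
      have hc : Continuous fun z : WeakDual ℝ H => |z (e k) - y (e k)| :=
        ((WeakDual.eval_continuous (e k)).sub continuous_const).abs
      have : IsOpen {z : WeakDual ℝ H | |z (e k) - y (e k)| < 1 / (m + 1 : ℝ)} :=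
        isOpen_lt hc continuous_const
      refine this.mem_nhds ?_
      simp [sub_self]
      positivity
    exact mapClusterPt_iff_frequently.mp hy _ hU
  obtain ⟨φ, hφmono, hφ⟩ := Filter.extraction_forall_of_frequently hfreq
  refine ⟨td.symm (WeakDual.toStrongDual y), by simpa using hynorm, φ, hφmono, ?_⟩
  intro h
  have hyapp : ∀ h' : H, (inner ℝ (td.symm (WeakDual.toStrongDual y)) h' : ℝ) = y h' := by
    intro h'
    have := InnerProductSpace.toDual_apply_apply (𝕜 := ℝ) (E := H)
      (x := td.symm (WeakDual.toStrongDual y)) (y := h')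
    rw [← this]
    simp [td]
  have hxapp : ∀ n (h' : H), x n h' = (inner ℝ (u n) h' : ℝ) := fun n h' => rfl
  rw [Metric.tendsto_atTop]
  intro ε hε
  obtain ⟨d, hdist, hdD⟩ := Metric.dense_iff.mp hDd h (ε/4) (by positivity)
  rw [hrange] at hdD
  obtain ⟨d', hd'⟩ := hdD
  obtain ⟨k, hk⟩ : ∃ k : ℕ, d = e k := ⟨d', hd'.symm⟩
  obtain ⟨N₀, hN₀⟩ : ∃ N : ℕ, 1 / (N + 1 : ℝ) < ε / 4 := by
    obtain ⟨N, hN⟩ := exists_nat_one_div_lt (show (0:ℝ) < ε/4 by positivity)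
    exact ⟨N, hN⟩
  refine ⟨max k N₀, fun m hm => ?_⟩
  have hkm : k ≤ m := le_trans (le_max_left _ _) hm
  have hNm : (N₀ : ℕ) ≤ m := le_trans (le_max_right _ _) hm
  have hmid : |x (φ m) (e k) - y (e k)| < 1 / (m + 1 : ℝ) := hφ m k hkm
  have hmono : (1 : ℝ) / (m + 1) ≤ 1 / (N₀ + 1) := by
    apply one_div_le_one_div_of_le (by positivity)
    exact_mod_cast Nat.succ_le_succ hNm
  have hek : ‖h - e k‖ < ε / 4 := by
    rw [← hk]
    rw [Metric.mem_ball, dist_comm] at hdist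
    simpa [dist_eq_norm] using hdist
  have h1 : |(inner ℝ (u (φ m)) (h - e k) : ℝ)| ≤ ε / 4 := by
    calc |(inner ℝ (u (φ m)) (h - e k) : ℝ)| ≤ ‖u (φ m)‖ * ‖h - e k‖ := by rw [← Real.norm_eq_abs]; exact norm_inner_le_norm _ _
      _ ≤ 1 * (ε/4) := by
          apply mul_le_mul (hu _) hek.le (norm_nonneg _)
          exact zero_le_one
      _ = ε/4 := one_mul _
  have h3 : |y (e k) - y h| ≤ ε / 4 := by
    have : y (e k) - y h = (WeakDual.toStrongDual y) (e k - h) := by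
      simp [map_sub]
    rw [this]
    calc |(WeakDual.toStrongDual y) (e k - h)| ≤ ‖WeakDual.toStrongDual y‖ * ‖e k - h‖ :=
          (WeakDual.toStrongDual y).le_opNorm _
      _ ≤ 1 * (ε/4) := by
          apply mul_le_mul hynorm _ (norm_nonneg _) zero_le_one
          rw [norm_sub_rev]; exact hek.le
      _ = ε/4 := one_mul _
  have hdec : (inner ℝ (u (φ m)) h : ℝ) - (inner ℝ (td.symm (WeakDual.toStrongDual y)) h : ℝ)
      = (inner ℝ (u (φ m)) (h - e k) : ℝ) + (x (φ m) (e k) - y (e k)) + (y (e k) - y h) := by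
    rw [hyapp]
    have e1 : (inner ℝ (u (φ m)) (h - e k) : ℝ) = (inner ℝ (u (φ m)) h : ℝ) - (inner ℝ (u (φ m)) (e k) : ℝ) := by
      rw [inner_sub_right]
    rw [e1, hxapp]
    ring
  rw [Real.dist_eq, hdec]
  calc |(inner ℝ (u (φ m)) (h - e k) : ℝ) + (x (φ m) (e k) - y (e k)) + (y (e k) - y h)|
      ≤ |(inner ℝ (u (φ m)) (h - e k) : ℝ) + (x (φ m) (e k) - y (e k))| + |y (e k) - y h| := abs_add_le _ _
    _ ≤ |(inner ℝ (u (φ m)) (h - e k) : ℝ)| + |x (φ m) (e k) - y (e k)| + |y (e k) - y h| := by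
        gcongr; exact abs_add_le _ _
    _ < ε/4 + ε/4 + ε/4 := by
        apply add_lt_add_of_lt_of_le _ h3
        apply add_lt_add_of_le_of_lt h1
        exact hmid.trans_le (hmono.trans hN₀.le)
    _ < ε := by linarith

theorem multi_extraction {q : ℕ} (u : ℕ → Fin q → H) (hu : ∀ n i, ‖u n i‖ ≤ 1) :
    ∃ φ : ℕ → ℕ, StrictMono φ ∧ ∃ g : Fin q → H,
      ∀ i (h : H), Tendsto (fun m => (inner ℝ (u (φ m) i) h : ℝ)) atTop (𝓝 (inner ℝ (g i) h)) := by
  induction q with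
  | zero => exact ⟨id, strictMono_id, Fin.elim0, fun i => i.elim0⟩
  | succ q ih =>
    obtain ⟨φ₁, hφ₁, g₁, hg₁⟩ := ih (fun n i => u n i.succ) (fun n i => hu n i.succ)
    obtain ⟨g₀, -, φ₂, hφ₂, hg₀⟩ := weak_seq_compact (fun m => u (φ₁ m) 0) (fun m => hu _ 0)
    refine ⟨φ₁ ∘ φ₂, hφ₁.comp hφ₂, Fin.cons g₀ g₁, ?_⟩
    intro i h
    refine Fin.cases ?_ ?_ i
    · simpa using hg₀ h
    · intro j
      have := (hg₁ j h).comp (hφ₂.tendsto_atTop)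
      exact this

end Hilbert

noncomputable def μ01 : Measure ℝ := volume.restrict (Set.Icc 0 1)

lemma μ01_def : μ01 = volume.restrict (Set.Icc 0 1) := rfl

instance : IsFiniteMeasure μ01 := ⟨by simp [μ01, Real.volume_Icc]⟩

instance : Fact ((2:ℝ≥0∞) ≠ ∞) := ⟨by norm_num⟩

lemma memℒp01 {f : ℝ → ℝ} (hm : Measurable f) (hb : ∀ x, |f x| ≤ 1) : MemLp f 2 μ01 :=
  MemLp.of_bound hm.aestronglyMeasurable 1 (Filter.Eventually.of_forall (by simpa using hb))

lemma norm_toLp_le_one {f : ℝ → ℝ} (hb : ∀ x, |f x| ≤ 1) (hf : MemLp f 2 μ01) :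
    ‖hf.toLp f‖ ≤ 1 := by
  rw [Lp.norm_toLp]
  have h1 : eLpNorm f 2 μ01 ≤ μ01 Set.univ ^ ((2:ℝ≥0∞).toReal)⁻¹ * ENNReal.ofReal 1 :=
    eLpNorm_le_of_ae_bound (Filter.Eventually.of_forall (by simpa using hb))
  have h2 : μ01 Set.univ = 1 := by simp [μ01, Real.volume_Icc]
  rw [h2] at h1
  simp at h1
  refine ENNReal.toReal_le_of_le_ofReal zero_le_one ?_
  simpa using h1

lemma inner_eq_int (f : Lp ℝ 2 μ01) {h : ℝ → ℝ} (hh : MemLp h 2 μ01) :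
    (inner ℝ f (hh.toLp h) : ℝ) = ∫ x, f x * h x ∂μ01 := by
  rw [L2.inner_def]
  apply integral_congr_ae
  filter_upwards [hh.coeFn_toLp] with x h2
  rw [h2]
  simp [RCLike.inner_apply, mul_comm]

lemma toLp_inner_eq_int {f h : ℝ → ℝ} (hf : MemLp f 2 μ01) (hh : MemLp h 2 μ01) :
    (inner ℝ (hf.toLp f) (hh.toLp h) : ℝ) = ∫ x, f x * h x ∂μ01 := by
  rw [inner_eq_int _ hh]
  apply integral_congr_ae
  filter_upwards [hf.coeFn_toLp] with x h1
  rw [h1]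

lemma mul_indicator_int {f : ℝ → ℝ} {s : Set ℝ} (hs : MeasurableSet s) :
    ∫ x, f x * s.indicator 1 x ∂μ01 = ∫ x in s, f x ∂μ01 := by
  rw [← integral_indicator hs]
  apply integral_congr_ae
  apply Filter.Eventually.of_forall
  intro x
  by_cases hx : x ∈ s <;> simp [Set.indicator_apply, hx]

theorem exists_subseq_partition_limit (q : ℕ) (hq : 0 < q) (ρs : ℕ → Fin q → ℝ → ℝ)
    (hρs : ∀ n, IsFracPartition q (ρs n)) :
    ∃ φ : ℕ → ℕ, StrictMono φ ∧ ∃ ρ : Fin q → ℝ → ℝ, IsFracPartition q ρ ∧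
      ∀ i (h : ℝ → ℝ), Measurable h → (∀ x, |h x| ≤ 1) →
        Tendsto (fun m => ∫ x, ρs (φ m) i x * h x ∂μ01) atTop
          (𝓝 (∫ x, ρ i x * h x ∂μ01)) := by
  classical
  have hb : ∀ n i x, |ρs n i x| ≤ 1 := by
    intro n i x
    have := (hρs n).2.1 i x
    rw [Set.mem_Icc] at this
    rw [abs_le]; constructor <;> linarith [this.1, this.2]
  have hmem : ∀ n i, MemLp (ρs n i) 2 μ01 := fun n i => memℒp01 ((hρs n).1 i) (hb n i)
  set u : ℕ → Fin q → Lp ℝ 2 μ01 := fun n i => (hmem n i).toLp _ with hu_def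
  have hunorm : ∀ n i, ‖u n i‖ ≤ 1 := fun n i => norm_toLp_le_one (hb n i) (hmem n i)
  obtain ⟨φ, hφ, g, hg⟩ := multi_extraction u hunorm
  set G : Fin q → ℝ → ℝ := fun i => AEStronglyMeasurable.mk _ (Lp.aestronglyMeasurable (g i))
    with hG_def
  have hGmeas : ∀ i, Measurable (G i) :=
    fun i => (Lp.aestronglyMeasurable (g i)).stronglyMeasurable_mk.measurable
  have hGae : ∀ i, (⇑(g i) : ℝ → ℝ) =ᵐ[μ01] G i := fun i => (Lp.aestronglyMeasurable (g i)).ae_eq_mk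
  have hGint : ∀ i, Integrable (G i) μ01 :=
    fun i => ((Lp.memLp (g i)).integrable (by norm_num)).congr (hGae i)
  -- convergence against bounded measurable tests, with limit G
  have key : ∀ (i : Fin q) (h : ℝ → ℝ), Measurable h → (∀ x, |h x| ≤ 1) →
      Tendsto (fun m => ∫ x, ρs (φ m) i x * h x ∂μ01) atTop (𝓝 (∫ x, G i x * h x ∂μ01)) := by
    intro i h hm hhb
    have hhmem : MemLp h 2 μ01 := memℒp01 hm hhb
    have conv := hg i (hhmem.toLp h)
    have e1 : ∀ m, (inner ℝ (u (φ m) i) (hhmem.toLp h) : ℝ) = ∫ x, ρs (φ m) i x * h x ∂μ01 :=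
      fun m => toLp_inner_eq_int _ _
    have e2 : (inner ℝ (g i) (hhmem.toLp h) : ℝ) = ∫ x, G i x * h x ∂μ01 := by
      rw [inner_eq_int _ hhmem]
      apply integral_congr_ae
      filter_upwards [hGae i] with x hx
      rw [hx]
    rw [e2] at conv
    exact conv.congr (fun m => e1 m)
  -- set integral convergence
  have hsetconv : ∀ (i : Fin q) (s : Set ℝ), MeasurableSet s →
      Tendsto (fun m => ∫ x in s, ρs (φ m) i x ∂μ01) atTop (𝓝 (∫ x in s, G i x ∂μ01)) := by
    intro i s hs
    have hind : Measurable (s.indicator (1 : ℝ → ℝ)) := measurable_one.indicator hs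
    have hindb : ∀ x, |s.indicator (1 : ℝ → ℝ) x| ≤ 1 := by
      intro x; by_cases hx : x ∈ s <;> simp [Set.indicator_apply, hx]
    have := key i _ hind hindb
    simp_rw [mul_indicator_int hs] at this
    exact this
  have hG0 : ∀ (i : Fin q) (s : Set ℝ), MeasurableSet s → 0 ≤ ∫ x in s, G i x ∂μ01 := by
    intro i s hs
    refine ge_of_tendsto (hsetconv i s hs) (Filter.Eventually.of_forall fun m => ?_)
    exact setIntegral_nonneg hs fun x _ => ((hρs (φ m)).2.1 i x).1
  have hG1 : ∀ (i : Fin q) (s : Set ℝ), MeasurableSet s →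
      ∫ x in s, G i x ∂μ01 ≤ (μ01 s).toReal := by
    intro i s hs
    refine le_of_tendsto (hsetconv i s hs) (Filter.Eventually.of_forall fun m => ?_)
    have : ∫ x in s, ρs (φ m) i x ∂μ01 ≤ ∫ x in s, (1:ℝ) ∂μ01 := by
      apply setIntegral_mono_on
      · exact ((hmem (φ m) i).integrable (by norm_num)).integrableOn
      · exact (integrable_const _).integrableOn
      · exact hs
      · exact fun x _ => ((hρs (φ m)).2.1 i x).2
    simpa [setIntegral_const, measureReal_def] using this
  have hGsum : ∀ (s : Set ℝ), MeasurableSet s →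
      ∑ i, ∫ x in s, G i x ∂μ01 = (μ01 s).toReal := by
    intro s hs
    have t1 : Tendsto (fun m => ∑ i, ∫ x in s, ρs (φ m) i x ∂μ01) atTop
        (𝓝 (∑ i, ∫ x in s, G i x ∂μ01)) := tendsto_finset_sum _ (fun i _ => hsetconv i s hs)
    have t2 : ∀ m, ∑ i, ∫ x in s, ρs (φ m) i x ∂μ01 = (μ01 s).toReal := by
      intro m
      rw [← integral_finset_sum]
      · have : ∀ x, ∑ i, ρs (φ m) i x = 1 := (hρs (φ m)).2.2
        simp_rw [this]
        simp [setIntegral_const, measureReal_def]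
      · exact fun i _ => ((hmem (φ m) i).integrable (by norm_num)).integrableOn
    rw [tendsto_congr t2] at t1
    exact tendsto_nhds_unique t1 tendsto_const_nhds
  -- a.e. properties of G
  have hae0 : ∀ i, 0 ≤ᵐ[μ01] G i := by
    intro i
    exact ae_nonneg_of_forall_setIntegral_nonneg (hGint i)
      (fun s hs _ => hG0 i s hs)
  have hae1 : ∀ i, ∀ᵐ x ∂μ01, G i x ≤ 1 := by
    intro i
    have : 0 ≤ᵐ[μ01] fun x => 1 - G i x := by
      apply ae_nonneg_of_forall_setIntegral_nonneg ((integrable_const 1).sub (hGint i))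
      intro s hs _
      simp only [Pi.sub_apply]
      rw [integral_sub (integrable_const _).integrableOn (hGint i).integrableOn]
      have := hG1 i s hs
      simp only [setIntegral_const, measureReal_def, smul_eq_mul, mul_one]
      linarith
    filter_upwards [this] with x hx
    simpa using hx
  have haesum : ∀ᵐ x ∂μ01, ∑ i, G i x = 1 := by
    have e1 : ∀ s : Set ℝ, MeasurableSet s → ∫ x in s, (∑ i, G i x) ∂μ01 = (μ01 s).toReal := by
      intro s hs
      rw [integral_finset_sum _ (fun i _ => (hGint i).integrableOn)]
      exact hGsum s hs
    have hintsum : Integrable (fun x => ∑ i, G i x) μ01 := integrable_finset_sum _ (fun i _ => hGint i)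
    have p1 : 0 ≤ᵐ[μ01] fun x => (∑ i, G i x) - 1 := by
      apply ae_nonneg_of_forall_setIntegral_nonneg (hintsum.sub (integrable_const 1))
      intro s hs _
      simp only [Pi.sub_apply]
      rw [integral_sub hintsum.integrableOn (integrable_const _).integrableOn, e1 s hs]
      simp [setIntegral_const, measureReal_def]
    have p2 : 0 ≤ᵐ[μ01] fun x => 1 - (∑ i, G i x) := by
      apply ae_nonneg_of_forall_setIntegral_nonneg ((integrable_const 1).sub hintsum)
      intro s hs _
      simp only [Pi.sub_apply]
      rw [integral_sub (integrable_const _).integrableOn hintsum.integrableOn, e1 s hs]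
      simp [setIntegral_const, measureReal_def]
    filter_upwards [p1, p2] with x h1 h2
    simp only [Pi.zero_apply] at h1 h2
    linarith
  -- the good set
  set A : Set ℝ := {x | (∀ j, 0 ≤ G j x ∧ G j x ≤ 1) ∧ ∑ j, G j x = 1} with hA_def
  have hAmeas : MeasurableSet A := by
    have : A = (⋂ j, {x | 0 ≤ G j x} ∩ {x | G j x ≤ 1}) ∩ {x | ∑ j, G j x = 1} := by
      ext x; simp [hA_def, forall_and]
    rw [this]
    refine MeasurableSet.inter (MeasurableSet.iInter fun j => ?_) ?_
    · exact (measurableSet_le measurable_const (hGmeas j)).inter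
        (measurableSet_le (hGmeas j) measurable_const)
    · exact measurableSet_eq_fun (Finset.measurable_sum _ (fun j _ => hGmeas j)) measurable_const
  have hAae : ∀ᵐ x ∂μ01, x ∈ A := by
    have hall : ∀ᵐ x ∂μ01, ∀ j, 0 ≤ G j x ∧ G j x ≤ 1 := by
      rw [MeasureTheory.ae_all_iff]
      intro j
      filter_upwards [hae0 j, hae1 j] with x h1 h2
      exact ⟨h1, h2⟩
    filter_upwards [hall, haesum] with x h1 h2
    exact ⟨h1, h2⟩
  set i₀ : Fin q := ⟨0, hq⟩ with hi₀
  set ρ : Fin q → ℝ → ℝ := fun i x => if x ∈ A then G i x else if i = i₀ then 1 else 0 with hρ_def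
  have hρpart : IsFracPartition q ρ := by
    refine ⟨fun i => Measurable.ite hAmeas (hGmeas i) measurable_const, fun i x => ?_, fun x => ?_⟩
    · by_cases hx : x ∈ A
      · simp only [hρ_def, if_pos hx]
        exact ⟨(hx.1 i).1, (hx.1 i).2⟩
      · simp only [hρ_def, if_neg hx]
        by_cases hi : i = i₀ <;> simp [hi]
    · by_cases hx : x ∈ A
      · simp only [hρ_def, if_pos hx]
        exact hx.2
      · simp only [hρ_def, if_neg hx]
        simp [Finset.sum_ite_eq']
  have hρae : ∀ i, ρ i =ᵐ[μ01] G i := by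
    intro i
    filter_upwards [hAae] with x hx
    simp [hρ_def, if_pos hx]
  refine ⟨φ, hφ, ρ, hρpart, ?_⟩
  intro i h hm hhb
  have := key i h hm hhb
  have e : ∫ x, G i x * h x ∂μ01 = ∫ x, ρ i x * h x ∂μ01 := by
    apply integral_congr_ae
    filter_upwards [hρae i] with x hx
    rw [hx]
  rw [e] at this
  exact this
lemma sq_measurable : MeasurableSet (Set.Icc (0:ℝ) 1 ×ˢ Set.Icc (0:ℝ) 1) :=
  measurableSet_Icc.prod measurableSet_Icc

lemma sq_volume : volume (Set.Icc (0:ℝ) 1 ×ˢ Set.Icc (0:ℝ) 1) = 1 := by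
  rw [Measure.volume_eq_prod, Measure.prod_prod]
  simp [Real.volume_Icc]

instance : IsFiniteMeasure (volume.restrict (Set.Icc (0:ℝ) 1 ×ˢ Set.Icc (0:ℝ) 1)) :=
  ⟨by rw [Measure.restrict_apply_univ, sq_volume]; norm_num⟩

/-- step functions built on rectangles -/
noncomputable def stepFn {n : ℕ} (c : Fin n × Fin n → ℝ) (I : Fin n → Set ℝ) : ℝ × ℝ → ℝ :=
  fun z => ∑ k : Fin n × Fin n, c k * (I k.1).indicator 1 z.1 * (I k.2).indicator 1 z.2

lemma stepFn_measurable {n : ℕ} (c : Fin n × Fin n → ℝ) (I : Fin n → Set ℝ)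
    (hI : ∀ a, MeasurableSet (I a)) : Measurable (stepFn c I) := by
  apply Finset.measurable_sum
  intro k _
  apply Measurable.mul
  · apply Measurable.mul measurable_const
    exact ((measurable_const.indicator (hI k.1)).comp measurable_fst)
  · exact ((measurable_const.indicator (hI k.2)).comp measurable_snd)

lemma indicator_one_nonneg {s : Set ℝ} (x : ℝ) : (0:ℝ) ≤ s.indicator 1 x := by
  by_cases hx : x ∈ s <;> simp [Set.indicator_apply, hx]

lemma indicator_one_le_one {s : Set ℝ} (x : ℝ) : s.indicator (1 : ℝ → ℝ) x ≤ 1 := by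
  by_cases hx : x ∈ s <;> simp [Set.indicator_apply, hx]

lemma stepFn_bound {n : ℕ} (c : Fin n × Fin n → ℝ) (I : Fin n → Set ℝ) (z : ℝ × ℝ) :
    |stepFn c I z| ≤ ∑ k : Fin n × Fin n, |c k| := by
  refine (Finset.abs_sum_le_sum_abs _ _).trans ?_
  apply Finset.sum_le_sum
  intro k _
  rw [abs_mul, abs_mul]
  calc |c k| * |(I k.1).indicator 1 z.1| * |(I k.2).indicator 1 z.2|
      ≤ |c k| * 1 * 1 := by
        apply mul_le_mul
        apply mul_le_mul le_rfl
        · rw [abs_of_nonneg (indicator_one_nonneg _)]; exact indicator_one_le_one _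
        · exact abs_nonneg _
        · exact abs_nonneg _
        · rw [abs_of_nonneg (indicator_one_nonneg _)]; exact indicator_one_le_one _
        · exact abs_nonneg _
        · positivity
    _ = |c k| := by ring

lemma stepFn_integrableOn {n : ℕ} (c : Fin n × Fin n → ℝ) (I : Fin n → Set ℝ)
    (hI : ∀ a, MeasurableSet (I a)) :
    IntegrableOn (stepFn c I) (Set.Icc (0:ℝ) 1 ×ˢ Set.Icc (0:ℝ) 1) := by
  have : MemLp (stepFn c I) 1 (volume.restrict (Set.Icc (0:ℝ) 1 ×ˢ Set.Icc (0:ℝ) 1)) := by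
    apply MemLp.of_bound (stepFn_measurable c I hI).aestronglyMeasurable
      (∑ k : Fin n × Fin n, |c k|)
    exact Filter.Eventually.of_forall fun z => by
      simpa [Real.norm_eq_abs] using stepFn_bound c I z
  exact (memLp_one_iff_integrable.mp this)
open Set

lemma grid_mem {N : ℕ} (hN : 0 < N) {x : ℝ} (hx : x ∈ Set.Ico (0:ℝ) 1) :
    ∃ a : Fin N, (x ∈ Set.Ico (((a:ℕ):ℝ)/N) ((((a:ℕ):ℝ)+1)/N)) ∧
      (∀ b : Fin N, b ≠ a → x ∉ Set.Ico (((b:ℕ):ℝ)/N) ((((b:ℕ):ℝ)+1)/N)) ∧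
      |x - ((a:ℕ):ℝ)/N| < 1/N := by
  obtain ⟨hx0, hx1⟩ := hx
  have hNR : (0:ℝ) < N := by exact_mod_cast hN
  set m : ℤ := ⌊(N:ℝ) * x⌋ with hm
  have hm0 : 0 ≤ m := Int.floor_nonneg.mpr (by positivity)
  have hmN : m < N := by
    rw [hm, Int.floor_lt]
    calc (N:ℝ) * x < N * 1 := by
          apply mul_lt_mul_of_pos_left hx1 hNR
      _ = ((N:ℤ):ℝ) := by push_cast; ring
  have hmlt : m.toNat < N := by omega
  refine ⟨⟨m.toNat, hmlt⟩, ?_, ?_, ?_⟩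
  · have hcast : ((m.toNat : ℕ) : ℝ) = (m : ℝ) := by
      exact_mod_cast congrArg Int.cast (Int.toNat_of_nonneg hm0)
    constructor
    · show ((m.toNat : ℕ):ℝ)/N ≤ x
      rw [hcast, div_le_iff₀ hNR]
      calc (m:ℝ) ≤ N * x := Int.floor_le _
        _ = x * N := mul_comm _ _
    · show x < (((m.toNat : ℕ):ℝ)+1)/N
      rw [hcast, lt_div_iff₀ hNR]
      calc x * N = N * x := mul_comm _ _
        _ < m + 1 := Int.lt_floor_add_one _
  · intro b hb hmem
    apply hb
    obtain ⟨h1, h2⟩ := hmem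
    have hb1 : ((b:ℕ):ℝ) ≤ N * x := by
      rw [div_le_iff₀ hNR] at h1
      calc ((b:ℕ):ℝ) ≤ x * N := h1
        _ = N * x := mul_comm _ _
    have hb2 : (N:ℝ) * x < (b:ℕ) + 1 := by
      rw [lt_div_iff₀ hNR] at h2
      calc (N:ℝ) * x = x * N := mul_comm _ _
        _ < (b:ℕ) + 1 := h2
    have : ((b:ℕ):ℤ) = m := by
      rw [hm]
      symm
      apply Int.floor_eq_iff.mpr
      constructor
      · push_cast; exact hb1
      · push_cast; exact hb2
    apply Fin.ext
    show (b:ℕ) = m.toNat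
    omega
  · have hcast : ((m.toNat : ℕ) : ℝ) = (m : ℝ) := by
      exact_mod_cast congrArg Int.cast (Int.toNat_of_nonneg hm0)
    show |x - ((m.toNat : ℕ):ℝ)/N| < 1/N
    rw [hcast]
    rw [abs_sub_lt_iff]
    constructor
    · have hub : x < ((m:ℝ)+1)/N := by
        rw [lt_div_iff₀ hNR]
        calc x * N = N * x := mul_comm _ _
          _ < m + 1 := Int.lt_floor_add_one _
      have hsplit : ((m:ℝ)+1)/N = (m:ℝ)/N + 1/N := by ring
      linarith
    · have : (m:ℝ)/N ≤ x := by
        rw [div_le_iff₀ hNR]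
        calc (m:ℝ) ≤ N * x := Int.floor_le _
          _ = x * N := mul_comm _ _
      have h1N : 0 < 1/(N:ℝ) := by positivity
      linarith

lemma step_approx (W : ℝ × ℝ → ℝ)
    (hW : IntegrableOn W (Set.Icc (0:ℝ) 1 ×ˢ Set.Icc (0:ℝ) 1)) {ε : ℝ} (hε : 0 < ε) :
    ∃ (n : ℕ) (c : Fin n × Fin n → ℝ) (I : Fin n → Set ℝ),
      (∀ a, MeasurableSet (I a)) ∧
      ∫ z in Set.Icc (0:ℝ) 1 ×ˢ Set.Icc (0:ℝ) 1, |W z - stepFn c I z| ≤ ε := by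
  set sq := Set.Icc (0:ℝ) 1 ×ˢ Set.Icc (0:ℝ) 1 with hsq
  have hf : Integrable (sq.indicator W) volume := hW.integrable_indicator sq_measurable
  obtain ⟨gc, hgsupp, hgL1, hgcont, hgint⟩ :=
    hf.exists_hasCompactSupport_integral_sub_le (half_pos hε)
  have hgu : UniformContinuous gc := hgsupp.uniformContinuous_of_continuous hgcont
  rw [Metric.uniformContinuous_iff] at hgu
  obtain ⟨δ, hδ, hδ'⟩ := hgu (ε/2) (half_pos hε)
  obtain ⟨n₀, hn₀⟩ := exists_nat_one_div_lt hδ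
  set N := n₀ + 1 with hNdef
  have hNpos : 0 < N := Nat.succ_pos _
  have hNR : (0:ℝ) < N := by exact_mod_cast hNpos
  have hNδ : 1/(N:ℝ) < δ := by
    have : ((N:ℕ):ℝ) = (n₀:ℝ) + 1 := by push_cast [hNdef]; ring
    rw [this]; exact hn₀
  set I : Fin N → Set ℝ := fun a => Set.Ico (((a:ℕ):ℝ)/N) ((((a:ℕ):ℝ)+1)/N) with hI
  set c : Fin N × Fin N → ℝ := fun k => gc (((k.1:ℕ):ℝ)/N, ((k.2:ℕ):ℝ)/N) with hc
  have hImeas : ∀ a, MeasurableSet (I a) := fun a => measurableSet_Ico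
  refine ⟨N, c, I, hImeas, ?_⟩
  have hpt : ∀ z : ℝ × ℝ, z.1 ∈ Set.Ico (0:ℝ) 1 → z.2 ∈ Set.Ico (0:ℝ) 1 →
      |gc z - stepFn c I z| ≤ ε/2 := by
    intro z hz1 hz2
    obtain ⟨a, ha, hauniq, hadist⟩ := grid_mem hNpos hz1
    obtain ⟨b, hb, hbuniq, hbdist⟩ := grid_mem hNpos hz2
    have hs : stepFn c I z = c (a, b) := by
      rw [stepFn, Fintype.sum_prod_type]
      rw [Finset.sum_eq_single a]
      · rw [Finset.sum_eq_single b]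
        · rw [Set.indicator_of_mem ha, Set.indicator_of_mem hb]
          simp
        · intro b' _ hb'
          rw [Set.indicator_of_notMem (hbuniq b' hb')]
          ring
        · intro hmem; exact absurd (Finset.mem_univ b) hmem
      · intro a' _ ha'
        apply Finset.sum_eq_zero; intro b' _
        rw [Set.indicator_of_notMem (hauniq a' ha')]
        ring
      · intro hmem; exact absurd (Finset.mem_univ a) hmem
    rw [hs]
    have hdist : dist ((((a:ℕ):ℝ)/N, ((b:ℕ):ℝ)/N) : ℝ×ℝ) z < δ := by
      rw [Prod.dist_eq]
      apply max_lt
      · rw [Real.dist_eq, abs_sub_comm]; exact lt_trans hadist hNδ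
      · rw [Real.dist_eq, abs_sub_comm]; exact lt_trans hbdist hNδ
    have hd := hδ' hdist
    rw [dist_comm, Real.dist_eq] at hd
    exact hd.le
  -- a.e. membership in the half-open square
  have hline1 : volume {z : ℝ×ℝ | z.1 = 1} = 0 := by
    have : {z : ℝ×ℝ | z.1 = 1} = ({(1:ℝ)} : Set ℝ) ×ˢ (Set.univ : Set ℝ) := by
      ext z
      constructor
      · intro hz; exact ⟨hz, Set.mem_univ _⟩
      · intro hz; exact hz.1
    rw [this, Measure.volume_eq_prod, Measure.prod_prod]
    simp
  have hline2 : volume {z : ℝ×ℝ | z.2 = 1} = 0 := by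
    have : {z : ℝ×ℝ | z.2 = 1} = (Set.univ : Set ℝ) ×ˢ ({(1:ℝ)} : Set ℝ) := by
      ext z
      constructor
      · intro hz; exact ⟨Set.mem_univ _, hz⟩
      · intro hz; exact hz.2
    rw [this, Measure.volume_eq_prod, Measure.prod_prod]
    simp
  have hae : ∀ᵐ z ∂(volume.restrict sq), z.1 ∈ Set.Ico (0:ℝ) 1 ∧ z.2 ∈ Set.Ico (0:ℝ) 1 := by
    have h1 : ∀ᵐ z : ℝ×ℝ ∂volume, ¬ (z.1 = 1) := by
      rw [ae_iff]; simpa using hline1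
    have h2 : ∀ᵐ z : ℝ×ℝ ∂volume, ¬ (z.2 = 1) := by
      rw [ae_iff]; simpa using hline2
    filter_upwards [ae_restrict_of_ae h1, ae_restrict_of_ae h2,
      ae_restrict_mem sq_measurable] with z hz1 hz2 hzsq
    obtain ⟨hm1, hm2⟩ := hzsq
    exact ⟨⟨hm1.1, lt_of_le_of_ne hm1.2 hz1⟩, ⟨hm2.1, lt_of_le_of_ne hm2.2 hz2⟩⟩
  have hstep_int : IntegrableOn (stepFn c I) sq := stepFn_integrableOn c I hImeas
  have hint1 : IntegrableOn (fun z => |W z - gc z|) sq := (hW.sub hgint.integrableOn).abs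
  have hint2 : IntegrableOn (fun z => |gc z - stepFn c I z|) sq :=
    (hgint.integrableOn.sub hstep_int).abs
  have hintW : IntegrableOn (fun z => |W z - stepFn c I z|) sq := (hW.sub hstep_int).abs
  have tri : ∫ z in sq, |W z - stepFn c I z|
      ≤ (∫ z in sq, |W z - gc z|) + ∫ z in sq, |gc z - stepFn c I z| := by
    rw [← integral_add hint1 hint2]
    apply integral_mono hintW (hint1.add hint2)
    intro z
    exact abs_sub_le _ _ _
  have hWgc : ∫ z in sq, |W z - gc z| ≤ ε/2 := by
    have e : ∫ z in sq, |W z - gc z| = ∫ z in sq, ‖sq.indicator W z - gc z‖ := by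
      apply integral_congr_ae
      filter_upwards [ae_restrict_mem sq_measurable] with z hz
      rw [Set.indicator_of_mem hz, Real.norm_eq_abs]
    rw [e]
    calc ∫ z in sq, ‖sq.indicator W z - gc z‖
        ≤ ∫ z, ‖sq.indicator W z - gc z‖ ∂volume := by
          apply setIntegral_le_integral (hf.sub hgint).norm
          exact Filter.Eventually.of_forall fun z => norm_nonneg _
      _ ≤ ε/2 := hgL1
  have hgcs : ∫ z in sq, |gc z - stepFn c I z| ≤ ε/2 := by
    have hmono : ∫ z in sq, |gc z - stepFn c I z| ≤ ∫ z in sq, (fun _ => ε/2) z := by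
      apply integral_mono_ae hint2 (integrable_const _)
      filter_upwards [hae] with z hz using hpt z hz.1 hz.2
    have hconst : ∫ z in sq, (fun _ => ε/2) z = ε/2 := by
      rw [setIntegral_const, measureReal_def, sq_volume]
      simp
    rw [hconst] at hmono
    exact hmono
  linarith

lemma qalpha_def (q : ℕ) (ρ : Fin q → ℝ → ℝ) (i : Fin q) :
    qalpha q ρ i = ∫ x, ρ i x ∂μ01 := rfl

lemma qbeta_def (q : ℕ) (W : ℝ × ℝ → ℝ) (ρ : Fin q → ℝ → ℝ) (i j : Fin q) :
    qbeta q W ρ i j = ∫ z in Set.Icc (0:ℝ) 1 ×ˢ Set.Icc (0:ℝ) 1,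
      ρ i z.1 * ρ j z.2 * W z := rfl

lemma pair_integrableOn {F G : ℝ → ℝ} (hF : Measurable F) (hG : Measurable G)
    (hF1 : ∀ x, |F x| ≤ 1) (hG1 : ∀ x, |G x| ≤ 1) :
    IntegrableOn (fun z : ℝ×ℝ => F z.1 * G z.2) (Set.Icc (0:ℝ) 1 ×ˢ Set.Icc (0:ℝ) 1) := by
  have hm : Measurable (fun z : ℝ×ℝ => F z.1 * G z.2) :=
    (hF.comp measurable_fst).mul (hG.comp measurable_snd)
  have : MemLp (fun z : ℝ×ℝ => F z.1 * G z.2) 1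
      (volume.restrict (Set.Icc (0:ℝ) 1 ×ˢ Set.Icc (0:ℝ) 1)) := by
    apply MemLp.of_bound hm.aestronglyMeasurable 1
    apply Filter.Eventually.of_forall
    intro z
    rw [Real.norm_eq_abs, abs_mul]
    calc |F z.1| * |G z.2| ≤ 1 * 1 :=
          mul_le_mul (hF1 _) (hG1 _) (abs_nonneg _) zero_le_one
      _ = 1 := one_mul _
  exact memLp_one_iff_integrable.mp this

lemma bdd_pair_mul_integrableOn {f g : ℝ → ℝ} (hf : Measurable f) (hg : Measurable g)
    (hf1 : ∀ x, |f x| ≤ 1) (hg1 : ∀ x, |g x| ≤ 1) {K : ℝ × ℝ → ℝ}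
    (hK : IntegrableOn K (Set.Icc (0:ℝ) 1 ×ˢ Set.Icc (0:ℝ) 1)) :
    IntegrableOn (fun z : ℝ×ℝ => f z.1 * g z.2 * K z)
      (Set.Icc (0:ℝ) 1 ×ˢ Set.Icc (0:ℝ) 1) := by
  apply hK.bdd_mul (c := 1)
  · exact ((hf.comp measurable_fst).mul (hg.comp measurable_snd)).aestronglyMeasurable
  · refine Filter.Eventually.of_forall fun z => ?_
    rw [Real.norm_eq_abs, abs_mul]
    calc |f z.1| * |g z.2| ≤ 1 * 1 :=
          mul_le_mul (hf1 _) (hg1 _) (abs_nonneg _) zero_le_one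
      _ = 1 := one_mul _

lemma fubini_step (F G : ℝ → ℝ) :
    ∫ z in Set.Icc (0:ℝ) 1 ×ˢ Set.Icc (0:ℝ) 1, F z.1 * G z.2
      = (∫ x, F x ∂μ01) * ∫ y, G y ∂μ01 := by
  have h : (volume : Measure (ℝ×ℝ)).restrict (Set.Icc (0:ℝ) 1 ×ˢ Set.Icc (0:ℝ) 1)
      = (μ01).prod μ01 := by
    rw [μ01_def, Measure.prod_restrict, Measure.volume_eq_prod]
  rw [h]
  exact integral_prod_mul F G

end Aux

set_option maxHeartbeats 2000000 in
/-- The set of fractional `q`-quotients of a graphon `W` is compact. -/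
theorem stmt12 (q : ℕ) (W : ℝ × ℝ → ℝ)
    (hW : IntegrableOn W (Set.Icc (0:ℝ) 1 ×ˢ Set.Icc (0:ℝ) 1))
    (hWs : ∀ x y : ℝ, W (x, y) = W (y, x)) :
    IsCompact {p : (Fin q → ℝ) × (Fin q → Fin q → ℝ) |
      ∃ ρ : Fin q → ℝ → ℝ, IsFracPartition q ρ ∧ p = (qalpha q ρ, qbeta q W ρ)} := by
  classical
  open Filter Topology Set in
  have hseq : IsSeqCompact {p : (Fin q → ℝ) × (Fin q → Fin q → ℝ) |
      ∃ ρ : Fin q → ℝ → ℝ, IsFracPartition q ρ ∧ p = (qalpha q ρ, qbeta q W ρ)} := by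
    intro x hx
    choose ρs hρs hxeq using hx
    have hq : 0 < q := by
      rcases Nat.eq_zero_or_pos q with h0 | h
      · exfalso
        have hsum := (hρs 0).2.2 0
        subst h0
        simpa using hsum
      · exact h
    obtain ⟨φ, hφ, ρ, hρ, hconv⟩ := exists_subseq_partition_limit q hq ρs hρs
    refine ⟨(qalpha q ρ, qbeta q W ρ), ⟨ρ, hρ, rfl⟩, φ, hφ, ?_⟩
    have hb1 : ∀ (σ : Fin q → ℝ → ℝ), IsFracPartition q σ → ∀ i x, |σ i x| ≤ 1 := by
      intro σ hσ i x
      have h := hσ.2.1 i x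
      rw [Set.mem_Icc] at h
      rw [abs_le]; constructor <;> linarith [h.1, h.2]
    have hxeq' : ∀ m, (x ∘ φ) m = (qalpha q (ρs (φ m)), qbeta q W (ρs (φ m))) :=
      fun m => hxeq (φ m)
    rw [tendsto_congr hxeq']
    apply Tendsto.prodMk_nhds
    · -- α convergence
      rw [tendsto_pi_nhds]
      intro i
      have h1 := hconv i (fun _ => 1) measurable_const (fun x => by norm_num)
      simp only [mul_one] at h1
      simp only [qalpha_def]
      exact h1
    · -- β convergence
      rw [tendsto_pi_nhds]
      intro i
      rw [tendsto_pi_nhds]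
      intro j
      rw [Metric.tendsto_atTop]
      intro ε hε
      obtain ⟨n, c, I, hImeas, happrox⟩ := step_approx W hW (show (0:ℝ) < ε/4 by positivity)
      -- the step kernel bound for any fractional partition pair
      have hbound : ∀ (σ : Fin q → ℝ → ℝ), IsFracPartition q σ →
          |(∫ z in Set.Icc (0:ℝ) 1 ×ˢ Set.Icc (0:ℝ) 1, σ i z.1 * σ j z.2 * W z)
            - ∫ z in Set.Icc (0:ℝ) 1 ×ˢ Set.Icc (0:ℝ) 1, σ i z.1 * σ j z.2 * stepFn c I z|
            ≤ ε/4 := by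
        intro σ hσ
        have hstep_int := stepFn_integrableOn c I hImeas
        have hint1 := bdd_pair_mul_integrableOn (hσ.1 i) (hσ.1 j) (hb1 σ hσ i) (hb1 σ hσ j) hW
        have hint2 := bdd_pair_mul_integrableOn (hσ.1 i) (hσ.1 j) (hb1 σ hσ i) (hb1 σ hσ j)
          hstep_int
        rw [← integral_sub hint1 hint2]
        have hptw : ∀ z : ℝ×ℝ, σ i z.1 * σ j z.2 * W z - σ i z.1 * σ j z.2 * stepFn c I z
            = σ i z.1 * σ j z.2 * (W z - stepFn c I z) := fun z => by ring
        simp_rw [hptw]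
        calc |∫ z in Set.Icc (0:ℝ) 1 ×ˢ Set.Icc (0:ℝ) 1,
                σ i z.1 * σ j z.2 * (W z - stepFn c I z)|
            ≤ ∫ z in Set.Icc (0:ℝ) 1 ×ˢ Set.Icc (0:ℝ) 1,
                |σ i z.1 * σ j z.2 * (W z - stepFn c I z)| := by
              have hni := norm_integral_le_integral_norm
                (μ := volume.restrict (Set.Icc (0:ℝ) 1 ×ˢ Set.Icc (0:ℝ) 1))
                (f := fun z : ℝ×ℝ => σ i z.1 * σ j z.2 * (W z - stepFn c I z))
              simpa only [Real.norm_eq_abs] using hni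
          _ ≤ ∫ z in Set.Icc (0:ℝ) 1 ×ˢ Set.Icc (0:ℝ) 1, |W z - stepFn c I z| := by
              have hA : Integrable (fun z : ℝ×ℝ => |σ i z.1 * σ j z.2 * (W z - stepFn c I z)|)
                  (volume.restrict (Set.Icc (0:ℝ) 1 ×ˢ Set.Icc (0:ℝ) 1)) := by
                refine ((hint1.sub hint2).abs).congr
                  (Filter.Eventually.of_forall fun z => ?_)
                simp only [Pi.sub_apply]
                rw [hptw z]
              have hB : Integrable (fun z : ℝ×ℝ => |W z - stepFn c I z|)
                  (volume.restrict (Set.Icc (0:ℝ) 1 ×ˢ Set.Icc (0:ℝ) 1)) := by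
                refine ((hW.sub hstep_int).abs).congr
                  (Filter.Eventually.of_forall fun z => ?_)
                simp only [Pi.sub_apply]
              apply integral_mono hA hB
              intro z
              dsimp only
              rw [abs_mul, abs_mul]
              calc |σ i z.1| * |σ j z.2| * |W z - stepFn c I z|
                  ≤ 1 * 1 * |W z - stepFn c I z| := by
                    apply mul_le_mul_of_nonneg_right _ (abs_nonneg _)
                    exact mul_le_mul (hb1 σ hσ i _) (hb1 σ hσ j _) (abs_nonneg _) zero_le_one
                _ = |W z - stepFn c I z| := by ring
          _ ≤ ε/4 := happrox
      -- Fubini decomposition of the step integral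
      have hfub : ∀ (σ : Fin q → ℝ → ℝ), IsFracPartition q σ →
          ∫ z in Set.Icc (0:ℝ) 1 ×ˢ Set.Icc (0:ℝ) 1, σ i z.1 * σ j z.2 * stepFn c I z
            = ∑ k : Fin n × Fin n, c k *
              ((∫ x, σ i x * (I k.1).indicator 1 x ∂μ01) *
               (∫ y, σ j y * (I k.2).indicator 1 y ∂μ01)) := by
        intro σ hσ
        have hptw : ∀ z : ℝ×ℝ, σ i z.1 * σ j z.2 * stepFn c I z
            = ∑ k : Fin n × Fin n, c k *
              ((σ i z.1 * (I k.1).indicator 1 z.1) * (σ j z.2 * (I k.2).indicator 1 z.2)) := by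
          intro z
          rw [stepFn, Finset.mul_sum]
          apply Finset.sum_congr rfl
          intro k _
          ring
        simp_rw [hptw]
        rw [integral_finset_sum]
        · apply Finset.sum_congr rfl
          intro k _
          have hFm : Measurable (fun x => σ i x * (I k.1).indicator 1 x) :=
            (hσ.1 i).mul (measurable_const.indicator (hImeas k.1))
          have hGm : Measurable (fun y => σ j y * (I k.2).indicator 1 y) :=
            (hσ.1 j).mul (measurable_const.indicator (hImeas k.2))
          rw [integral_const_mul]
          congr 1
          exact fubini_step (fun x => σ i x * (I k.1).indicator 1 x)
            (fun y => σ j y * (I k.2).indicator 1 y)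
        · intro k _
          apply Integrable.const_mul
          have hFb : ∀ x, |σ i x * (I k.1).indicator 1 x| ≤ 1 := by
            intro x
            rw [abs_mul]
            calc |σ i x| * |(I k.1).indicator 1 x| ≤ 1 * 1 := by
                  apply mul_le_mul (hb1 σ hσ i x) _ (abs_nonneg _) zero_le_one
                  rw [abs_of_nonneg (indicator_one_nonneg _)]
                  exact indicator_one_le_one _
              _ = 1 := one_mul _
          have hGb : ∀ y, |σ j y * (I k.2).indicator 1 y| ≤ 1 := by
            intro y
            rw [abs_mul]
            calc |σ j y| * |(I k.2).indicator 1 y| ≤ 1 * 1 := by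
                  apply mul_le_mul (hb1 σ hσ j y) _ (abs_nonneg _) zero_le_one
                  rw [abs_of_nonneg (indicator_one_nonneg _)]
                  exact indicator_one_le_one _
              _ = 1 := one_mul _
          exact pair_integrableOn (F := fun x => σ i x * (I k.1).indicator 1 x)
            (G := fun y => σ j y * (I k.2).indicator 1 y)
            ((hσ.1 i).mul (measurable_const.indicator (hImeas k.1)))
            ((hσ.1 j).mul (measurable_const.indicator (hImeas k.2))) hFb hGb
      -- convergence of the step sums
      have hTconv : Tendsto (fun m => ∑ k : Fin n × Fin n, c k *
          ((∫ x, ρs (φ m) i x * (I k.1).indicator 1 x ∂μ01) *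
           (∫ y, ρs (φ m) j y * (I k.2).indicator 1 y ∂μ01))) atTop
          (𝓝 (∑ k : Fin n × Fin n, c k *
          ((∫ x, ρ i x * (I k.1).indicator 1 x ∂μ01) *
           (∫ y, ρ j y * (I k.2).indicator 1 y ∂μ01)))) := by
        apply tendsto_finset_sum
        intro k _
        apply Tendsto.const_mul
        apply Tendsto.mul
        · exact hconv i _ (measurable_const.indicator (hImeas k.1))
            (fun x => by
              rw [abs_of_nonneg (indicator_one_nonneg _)]
              exact indicator_one_le_one _)
        · exact hconv j _ (measurable_const.indicator (hImeas k.2))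
            (fun x => by
              rw [abs_of_nonneg (indicator_one_nonneg _)]
              exact indicator_one_le_one _)
      rw [Metric.tendsto_atTop] at hTconv
      obtain ⟨M, hM⟩ := hTconv (ε/4) (by positivity)
      refine ⟨M, fun m hm => ?_⟩
      have h1 := hbound (ρs (φ m)) (hρs (φ m))
      rw [hfub (ρs (φ m)) (hρs (φ m))] at h1
      have h2 := hbound ρ hρ
      rw [hfub ρ hρ] at h2
      have h3 := hM m hm
      rw [Real.dist_eq] at h3 ⊢
      rw [qbeta_def, qbeta_def]
      set A := ∫ z in Set.Icc (0:ℝ) 1 ×ˢ Set.Icc (0:ℝ) 1,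
        ρs (φ m) i z.1 * ρs (φ m) j z.2 * W z with hA
      set D := ∫ z in Set.Icc (0:ℝ) 1 ×ˢ Set.Icc (0:ℝ) 1, ρ i z.1 * ρ j z.2 * W z with hD
      set B := ∑ k : Fin n × Fin n, c k *
          ((∫ x, ρs (φ m) i x * (I k.1).indicator 1 x ∂μ01) *
           (∫ y, ρs (φ m) j y * (I k.2).indicator 1 y ∂μ01)) with hB
      set C := ∑ k : Fin n × Fin n, c k *
          ((∫ x, ρ i x * (I k.1).indicator 1 x ∂μ01) *
           (∫ y, ρ j y * (I k.2).indicator 1 y ∂μ01)) with hC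
      have t1 := abs_sub_le A B D
      have t2 := abs_sub_le B C D
      have t3 : |C - D| = |D - C| := abs_sub_comm _ _
      linarith
  exact hseq.isCompact
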